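/- Let m, n, p, q be natural numbers with m ≥ n. Let H00, H01, H10, H11 be real matrices of sizes p×p, p×q, q×p, q×q respectively. Let A be a real m×n matrix admitting a singular value decomposition A = Q · S · Rᵀ, where Q is an m×m orthogonal matrix, R is an n×n orthogonal matrix, σ : Fin n → ℝ, and S is the m×n matrix whose (i,j) entry is σ j if the indices i and j are equal as natural numbers and 0 otherwise. Then the characteristic polynomial of the (m·p+n·q)×(m·p+n·q) block matrix [[I_m ⊗ H00, A ⊗ H01], [Aᵀ ⊗ H10, I_n ⊗ H11]] equals (∏_{j : Fin n} charpoly(H↑(σ j))) · (charpoly(H00))^(m−n). -/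
import Mathlib
open Matrix Polynomial Kronecker



lemma my_charpoly_conj {n : Type*} [Fintype n] [DecidableEq n]
    (P N P' : Matrix n n ℝ) (h : P * P' = 1) :
    (P * N * P').charpoly = N.charpoly := by
  have hmap : P.map C * P'.map C = 1 := by
    rw [← Matrix.map_mul, h]; simp
  have hm : charmatrix (P * N * P') =
      P.map C * charmatrix N * P'.map C := by
    simp only [charmatrix, RingHom.mapMatrix_apply]
    rw [Matrix.mul_sub, Matrix.sub_mul]
    congr 1
    · rw [(Matrix.scalar_commute (X : ℝ[X]) (Commute.all _) (P.map C)).symm.eq,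
        Matrix.mul_assoc, hmap, Matrix.mul_one]
    · simp [Matrix.map_mul, Matrix.mul_assoc]
  have hd : (P.map (C : ℝ →+* ℝ[X])).det * (P'.map C).det = 1 := by
    rw [← Matrix.det_mul, hmap, Matrix.det_one]
  rw [Matrix.charpoly, hm, Matrix.det_mul, Matrix.det_mul, Matrix.charpoly,
    mul_right_comm, hd, one_mul]

lemma my_charpoly_blockDiagonal {o n : Type*} [Fintype o] [DecidableEq o]
    [Fintype n] [DecidableEq n] (B : o → Matrix n n ℝ) :
    (Matrix.blockDiagonal B).charpoly = ∏ i, (B i).charpoly := by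
  have : charmatrix (Matrix.blockDiagonal B) = Matrix.blockDiagonal fun i => charmatrix (B i) := by
    ext ⟨i, k⟩ ⟨j, l⟩
    simp [charmatrix_apply, Matrix.blockDiagonal_apply, Matrix.diagonal_apply, Prod.ext_iff]
    split_ifs <;> simp_all
  rw [Matrix.charpoly, this, Matrix.det_blockDiagonal]
  rfl



theorem stmt0 (m n p q : ℕ) (hmn : m ≥ n)
    (H00 : Matrix (Fin p) (Fin p) ℝ) (H01 : Matrix (Fin p) (Fin q) ℝ)
    (H10 : Matrix (Fin q) (Fin p) ℝ) (H11 : Matrix (Fin q) (Fin q) ℝ)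
    (A : Matrix (Fin m) (Fin n) ℝ)
    (Q : Matrix (Fin m) (Fin m) ℝ) (R : Matrix (Fin n) (Fin n) ℝ)
    (σ : Fin n → ℝ) (S : Matrix (Fin m) (Fin n) ℝ)
    (hQ : Qᵀ * Q = 1) (hR : Rᵀ * R = 1)
    (hS : ∀ (i : Fin m) (j : Fin n), S i j = if (i : ℕ) = (j : ℕ) then σ j else 0)
    (hA : A = Q * S * Rᵀ) :
    (Matrix.fromBlocks ((1 : Matrix (Fin m) (Fin m) ℝ) ⊗ₖ H00) (A ⊗ₖ H01)
        (Aᵀ ⊗ₖ H10) ((1 : Matrix (Fin n) (Fin n) ℝ) ⊗ₖ H11)).charpoly =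
      (∏ j : Fin n,
        (Matrix.fromBlocks H00 (σ j • H01) (σ j • H10) H11).charpoly) *
        H00.charpoly ^ (m - n) := by
  have hQQ : Q * Qᵀ = 1 := mul_eq_one_comm.mp hQ
  have hRR : R * Rᵀ = 1 := mul_eq_one_comm.mp hR
  set M' : Matrix ((Fin m × Fin p) ⊕ (Fin n × Fin q)) _ ℝ :=
    Matrix.fromBlocks ((1 : Matrix (Fin m) (Fin m) ℝ) ⊗ₖ H00) (S ⊗ₖ H01)
      (Sᵀ ⊗ₖ H10) ((1 : Matrix (Fin n) (Fin n) ℝ) ⊗ₖ H11) with hM'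
  set P : Matrix ((Fin m × Fin p) ⊕ (Fin n × Fin q)) _ ℝ :=
    Matrix.fromBlocks (Q ⊗ₖ (1 : Matrix (Fin p) (Fin p) ℝ)) 0 0
      (R ⊗ₖ (1 : Matrix (Fin q) (Fin q) ℝ)) with hP
  set P' : Matrix ((Fin m × Fin p) ⊕ (Fin n × Fin q)) _ ℝ :=
    Matrix.fromBlocks (Qᵀ ⊗ₖ (1 : Matrix (Fin p) (Fin p) ℝ)) 0 0
      (Rᵀ ⊗ₖ (1 : Matrix (Fin q) (Fin q) ℝ)) with hP'
  have hPP' : P * P' = 1 := by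
    simp [hP, hP', Matrix.fromBlocks_multiply, ← Matrix.mul_kronecker_mul, hQQ, hRR,
      ← Matrix.fromBlocks_one]
  have hconj : Matrix.fromBlocks ((1 : Matrix (Fin m) (Fin m) ℝ) ⊗ₖ H00) (A ⊗ₖ H01)
      (Aᵀ ⊗ₖ H10) ((1 : Matrix (Fin n) (Fin n) ℝ) ⊗ₖ H11) = P * M' * P' := by
    subst hA
    simp only [hP, hP', hM', Matrix.fromBlocks_multiply, Matrix.zero_mul, Matrix.mul_zero,
      add_zero, zero_add, ← Matrix.mul_kronecker_mul, Matrix.mul_one, Matrix.one_mul,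
      Matrix.transpose_mul, Matrix.transpose_transpose]
    rw [hQQ, hRR]
    rw [Matrix.mul_assoc R]
  rw [hconj, my_charpoly_conj P M' P' hPP']
  let e : (Fin m × Fin p ⊕ Fin n × Fin q) ≃ ((Fin p ⊕ Fin q) × Fin n ⊕ Fin p × Fin (m - n)) :=
  { toFun := fun x => match x with
      | .inl (i, a) => if h : (i : ℕ) < n then .inl (.inl a, ⟨i, h⟩)
          else .inr (a, ⟨(i : ℕ) - n, by omega⟩)
      | .inr (j, b) => .inl (.inr b, j)
    invFun := fun x => match x with
      | .inl (.inl a, j) => .inl (⟨j, lt_of_lt_of_le j.2 hmn⟩, a)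
      | .inl (.inr b, j) => .inr (j, b)
      | .inr (a, k) => .inl (⟨n + (k : ℕ), by omega⟩, a)
    left_inv := by
      rintro (⟨i, a⟩ | ⟨j, b⟩)
      · dsimp only
        split_ifs with h
        · simp
        · simp only [Sum.inl.injEq, Prod.mk.injEq]
          exact ⟨Fin.ext (by simp; omega), trivial⟩
      · rfl
    right_inv := by
      rintro (⟨a | b, j⟩ | ⟨a, k⟩)
      · dsimp only
        rw [dif_pos j.2]
      · rfl
      · dsimp only
        rw [dif_neg (by omega)]
        simp only [Sum.inr.injEq, Prod.mk.injEq]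
        exact ⟨trivial, Fin.ext (by simp)⟩ }
  have hre : Matrix.reindex e e M' =
      Matrix.fromBlocks
        (Matrix.blockDiagonal fun j : Fin n =>
          Matrix.fromBlocks H00 (σ j • H01) (σ j • H10) H11) 0 0
        (Matrix.blockDiagonal fun _ : Fin (m - n) => H00) := by
    ext x y
    rcases x with ⟨u | u, j⟩ | ⟨a, k⟩ <;> rcases y with ⟨v | v, j'⟩ | ⟨a', k'⟩ <;>
      simp [e, hM', Matrix.blockDiagonal_apply, Matrix.one_apply, hS,
        Fin.ext_iff, Matrix.smul_apply] <;>
      first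
        | (intro h; exfalso; omega)
        | (split_ifs <;> simp_all <;>
            first
              | omega
              | (left; exact (congrArg σ (Fin.ext (by omega))).symm))
  rw [← Matrix.charpoly_reindex e M', hre, Matrix.charpoly_fromBlocks_zero₁₂,
    my_charpoly_blockDiagonal, my_charpoly_blockDiagonal, Finset.prod_const,
    Finset.card_univ, Fintype.card_fin]
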